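/- Let F(w₁,…,wₙ) = (1/2)∑_{i,j=1}^n f(w_i,w_j) − ∑_{i∈[n],j∈[k]} f(w_i,v_j) + (1/2)∑_{i,j=1}^k f(v_i,v_j), where f(w,v) = (1/(2π))‖w‖‖v‖(sin θ_{w,v} + (π−θ_{w,v})cos θ_{w,v}) and f is nonnegative. Then for fixed nonzero (w₁,…,wₙ), the function t ↦ F(tw₁,…,twₙ) for t ≥ 0 is a quadratic polynomial in t with strictly positive leading coefficient; consequently F has no local maximum at any point other than possibly the origin. -/

import Mathlib

open Real InnerProductGeometry Finset

/-- `f(w,v) = (1/(2π)) ‖w‖ ‖v‖ (sin θ_{w,v} + (π − θ_{w,v}) cos θ_{w,v})`. -/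
noncomputable def fpair {d : ℕ} (w v : EuclideanSpace ℝ (Fin d)) : ℝ :=
  (1 / (2 * π)) * ‖w‖ * ‖v‖ *
    (sin (angle w v) + (π - angle w v) * cos (angle w v))

/-- The closed-form population objective
`F(w₁,…,wₙ) = (1/2)∑ᵢⱼ f(wᵢ,wⱼ) − ∑ᵢⱼ f(wᵢ,vⱼ) + (1/2)∑ᵢⱼ f(vᵢ,vⱼ)`. -/
noncomputable def Fobj {d n k : ℕ} (v : Fin k → EuclideanSpace ℝ (Fin d))
    (w : Fin n → EuclideanSpace ℝ (Fin d)) : ℝ :=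
  (1 / 2) * ∑ i : Fin n, ∑ j : Fin n, fpair (w i) (w j)
    - ∑ i : Fin n, ∑ j : Fin k, fpair (w i) (v j)
    + (1 / 2) * ∑ i : Fin k, ∑ j : Fin k, fpair (v i) (v j)

lemma trig_aux {θ : ℝ} (h0 : 0 ≤ θ) (h1 : θ ≤ π) :
    0 ≤ sin θ + (π - θ) * cos θ := by
  rcases le_or_gt θ (π / 2) with h | h
  · have hs : 0 ≤ sin θ := sin_nonneg_of_nonneg_of_le_pi h0 h1
    have hc : 0 ≤ cos θ := Real.cos_nonneg_of_mem_Icc ⟨by linarith [pi_pos], h⟩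
    have : 0 ≤ π - θ := by linarith
    positivity
  · set φ : ℝ := π - θ with hφ
    have hφ0 : 0 ≤ φ := by simp [hφ]; linarith
    have hφlt : φ < π / 2 := by simp [hφ]; linarith
    have hsin : sin θ = sin φ := by rw [hφ]; rw [Real.sin_pi_sub]
    have hcos : cos θ = -cos φ := by rw [hφ, Real.cos_pi_sub, neg_neg]
    rw [hsin, hcos]
    rcases hφ0.eq_or_lt with h0' | h0'
    · simp [← h0']
    · have hc : 0 < cos φ := cos_pos_of_mem_Ioo ⟨by linarith [pi_pos], hφlt⟩
      have := Real.lt_tan h0' hφlt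
      have : φ * cos φ < sin φ := by
        rw [Real.tan_eq_sin_div_cos] at this
        calc φ * cos φ < (sin φ / cos φ) * cos φ := by
              exact mul_lt_mul_of_pos_right this hc
          _ = sin φ := by field_simp
      nlinarith

lemma fpair_nonneg {d : ℕ} (w v : EuclideanSpace ℝ (Fin d)) : 0 ≤ fpair w v := by
  unfold fpair
  have h0 := angle_nonneg w v
  have h1 := angle_le_pi w v
  have := trig_aux h0 h1
  have hπ := pi_pos
  positivity

lemma fpair_self {d : ℕ} {w : EuclideanSpace ℝ (Fin d)} (hw : w ≠ 0) :
    fpair w w = ‖w‖ ^ 2 / 2 := by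
  unfold fpair
  rw [angle_self hw]
  have hπ := pi_ne_zero
  field_simp
  simp

lemma fpair_smul_smul {d : ℕ} {t : ℝ} (ht : 0 ≤ t) (w v : EuclideanSpace ℝ (Fin d)) :
    fpair (t • w) (t • v) = t ^ 2 * fpair w v := by
  rcases ht.eq_or_lt with h | h
  · simp [fpair, ← h]
  · unfold fpair
    rw [angle_smul_left_of_pos _ _ h, angle_smul_right_of_pos _ _ h,
      norm_smul, norm_smul, Real.norm_eq_abs, abs_of_pos h]
    ring

lemma fpair_smul_left {d : ℕ} {t : ℝ} (ht : 0 ≤ t) (w v : EuclideanSpace ℝ (Fin d)) :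
    fpair (t • w) v = t * fpair w v := by
  rcases ht.eq_or_lt with h | h
  · simp [fpair, ← h]
  · unfold fpair
    rw [angle_smul_left_of_pos _ _ h, norm_smul, Real.norm_eq_abs, abs_of_pos h]
    ring

/-- For fixed `(w₁,…,wₙ)` not all zero, `t ↦ F(t w₁, …, t wₙ)` (`t ≥ 0`) is a quadratic
polynomial in `t` with strictly positive leading coefficient; consequently `F` has no
local maximum at any point other than possibly the origin. -/
theorem stmt16 (d n k : ℕ) (v : Fin k → EuclideanSpace ℝ (Fin d))
    (w : Fin n → EuclideanSpace ℝ (Fin d)) (hw : ∃ i, w i ≠ 0) :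
    (∃ a b c : ℝ, 0 < a ∧
      ∀ t : ℝ, 0 ≤ t → Fobj v (fun i => t • w i) = a * t ^ 2 + b * t + c) ∧
    ¬ IsLocalMax (Fobj v) w := by
  obtain ⟨i₀, hi₀⟩ := hw
  set A : ℝ := (1 / 2) * ∑ i : Fin n, ∑ j : Fin n, fpair (w i) (w j) with hA
  set B : ℝ := -(∑ i : Fin n, ∑ j : Fin k, fpair (w i) (v j)) with hB
  set C : ℝ := (1 / 2) * ∑ i : Fin k, ∑ j : Fin k, fpair (v i) (v j) with hC
  have hApos : 0 < A := by
    rw [hA]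
    have hsum : 0 < ∑ i : Fin n, ∑ j : Fin n, fpair (w i) (w j) := by
      apply Finset.sum_pos' (fun i _ => Finset.sum_nonneg fun j _ => fpair_nonneg _ _)
      refine ⟨i₀, Finset.mem_univ _, ?_⟩
      apply Finset.sum_pos' (fun j _ => fpair_nonneg _ _)
      refine ⟨i₀, Finset.mem_univ _, ?_⟩
      rw [fpair_self hi₀]
      have : 0 < ‖w i₀‖ := norm_pos_iff.2 hi₀
      positivity
    linarith
  have key : ∀ t : ℝ, 0 ≤ t →
      Fobj v (fun i => t • w i) = A * t ^ 2 + B * t + C := by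
    intro t ht
    unfold Fobj
    simp only [fpair_smul_smul ht, fpair_smul_left ht, ← Finset.mul_sum]
    rw [hA, hB, hC]; ring
  refine ⟨⟨A, B, C, hApos, key⟩, ?_⟩
  intro hmax
  have hcont : ContinuousAt (fun t : ℝ => (fun i => t • w i)) 1 := by
    apply continuousAt_pi.2
    intro i
    exact (continuous_id.smul continuous_const).continuousAt
  have h1 : (fun i => (1 : ℝ) • w i) = w := by funext i; simp
  have hcomp : IsLocalMax ((Fobj v) ∘ fun t : ℝ => (fun i => t • w i)) 1 := by
    apply IsLocalMax.comp_continuous _ hcont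
    rw [h1]; exact hmax
  -- extract a neighborhood
  rw [IsLocalMax, IsMaxFilter, Metric.eventually_nhds_iff] at hcomp
  obtain ⟨ε, hε, hball⟩ := hcomp
  set δ : ℝ := min (ε / 2) (1 / 2) with hδ
  have hδ0 : 0 < δ := by positivity
  have hδε : δ < ε := lt_of_le_of_lt (min_le_left _ _) (by linarith)
  have hδ1 : δ ≤ 1 / 2 := min_le_right _ _
  have hplus := hball (y := 1 + δ) (by simp [abs_of_pos hδ0]; linarith)
  have hminus := hball (y := 1 - δ) (by rw [Real.dist_eq, show (1 - δ - 1 : ℝ) = -δ by ring, abs_neg, abs_of_pos hδ0]; linarith)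
  simp only [Function.comp] at hplus hminus hball
  rw [key (1 + δ) (by linarith)] at hplus
  rw [key (1 - δ) (by linarith)] at hminus
  rw [h1] at hplus hminus
  have h1' := key 1 (by norm_num)
  rw [h1] at h1'
  rw [h1'] at hplus hminus
  nlinarith [mul_pos hApos (mul_pos hδ0 hδ0)]
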